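/- arXiv:2507.08692 — 3 statements merged into one kernel-verified Lean document; each statement's English description precedes it below -/
import Mathlib

section
/- The intrinsic second derivative of a C²-function f at θ ∈ S^{n−1}, defined as the Hilbert–Schmidt-norm-minimal symmetric matrix B satisfying the second-order Taylor expansion of f along the sphere at θ, is given by f_S''(θ) = P_{θ^⊥}(f''(θ) − ⟨θ, ∇f(θ)⟩ I_n)P_{θ^⊥}, where P_{θ^⊥} is the orthogonal projection onto θ^⊥. In particular, |f_S''(θ)|_HS ≤ |f''(θ) − ⟨θ,∇f(θ)⟩I_n|_HS. -/
open scoped RealInnerProductSpace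
open Asymptotics

/-- The Frobenius norm of a square matrix. -/
noncomputable def frobNorm {n : ℕ} (M : Matrix (Fin n) (Fin n) ℝ) : ℝ :=
  Real.sqrt (∑ i, ∑ j, (M i j) ^ 2)

section AuxLemmas
open Matrix

lemma taylor2 {E : Type*} [NormedAddCommGroup E] [NormedSpace ℝ E] (f : E → ℝ)
    (hf : ContDiff ℝ 2 f) (θ : E) :
    (fun x => f x - f θ - fderiv ℝ f θ (x - θ) -
        (1/2) * (fderiv ℝ (fderiv ℝ f) θ (x - θ) (x - θ))) =o[nhds θ]
      (fun x => ‖x - θ‖^2) := by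
  set φ := fderiv ℝ f with hφdef
  set Q := fderiv ℝ (fderiv ℝ f) θ with hQdef
  have hf1 : ContDiff ℝ 1 f := hf.of_le (by norm_num)
  have hdf : ∀ y, HasFDerivAt f (φ y) y := fun y =>
    (hf1.differentiable (by norm_num) y).hasFDerivAt
  have hφ1 : ContDiff ℝ 1 φ := hf.fderiv_right (by norm_num)
  have hQ : HasFDerivAt φ Q θ := (hφ1.differentiable (by norm_num) θ).hasFDerivAt
  have hsymm : ∀ v w, Q v w = Q w v := second_derivative_symmetric hdf hQ
  set g : E → ℝ := fun x => f x - φ θ (x - θ) - (1/2) * (Q (x - θ) (x - θ)) with hgdef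
  have hg' : ∀ x, HasFDerivAt g (φ x - φ θ - Q (x - θ)) x := by
    intro x
    have h1 : HasFDerivAt (fun x : E => φ θ (x - θ)) (φ θ) x := by
      exact ((φ θ).hasFDerivAt).comp x ((hasFDerivAt_id x).sub_const θ)
    have hbil : IsBoundedBilinearMap ℝ (fun p : E × E => Q p.1 p.2) :=
      Q.isBoundedBilinearMap
    have h2 : HasFDerivAt (fun x : E => Q (x - θ) (x - θ))
        ((hbil.deriv (x - θ, x - θ)).comp
          ((ContinuousLinearMap.id ℝ E).prod (ContinuousLinearMap.id ℝ E))) x := by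
      have hD : HasFDerivAt (fun x : E => (x - θ, x - θ))
          ((ContinuousLinearMap.id ℝ E).prod (ContinuousLinearMap.id ℝ E)) x :=
        (HasFDerivAt.prodMk ((hasFDerivAt_id x).sub_const θ) ((hasFDerivAt_id x).sub_const θ))
      exact (hbil.hasFDerivAt (x - θ, x - θ)).comp x hD
    have h2' : HasFDerivAt (fun x : E => (1/2) * (Q (x - θ) (x - θ)))
        (Q (x - θ)) x := by
      have h3 := h2.const_smul ((1:ℝ)/2)
      refine HasFDerivAt.congr_fderiv h3 ?_
      ext v
      have hv := hsymm v (x - θ)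
      simp [IsBoundedBilinearMap.deriv_apply, ContinuousLinearMap.smul_apply,
        ContinuousLinearMap.comp_apply, ContinuousLinearMap.prod_apply]
      simp only [ContinuousLinearMap.map_sub, ContinuousLinearMap.sub_apply] at hv
      linarith [hv]
    exact ((hdf x).sub h1).sub h2'
  rw [isLittleO_iff]
  intro c hc
  have hlo : (fun x => φ x - φ θ - Q (x - θ)) =o[nhds θ] (fun x => x - θ) := hQ.isLittleO
  rw [isLittleO_iff] at hlo
  obtain ⟨δ, hδ, hball⟩ := Metric.eventually_nhds_iff_ball.1 (hlo hc)
  rw [Metric.eventually_nhds_iff_ball]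
  refine ⟨δ, hδ, fun x hx => ?_⟩
  have key : ∀ y ∈ Metric.closedBall θ ‖x - θ‖,
      HasFDerivWithinAt g (φ y - φ θ - Q (y - θ)) (Metric.closedBall θ ‖x - θ‖) y :=
    fun y _ => (hg' y).hasFDerivWithinAt
  have bound : ∀ y ∈ Metric.closedBall θ ‖x - θ‖,
      ‖φ y - φ θ - Q (y - θ)‖ ≤ c * ‖x - θ‖ := by
    intro y hy
    rw [Metric.mem_closedBall] at hy
    have hyball : y ∈ Metric.ball θ δ := by
      rw [Metric.mem_ball] at hx ⊢
      calc dist y θ ≤ ‖x - θ‖ := hy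
        _ = dist x θ := by rw [dist_eq_norm]
        _ < δ := hx
    calc ‖φ y - φ θ - Q (y - θ)‖ ≤ c * ‖y - θ‖ := hball y hyball
      _ ≤ c * ‖x - θ‖ := by
          apply mul_le_mul_of_nonneg_left _ hc.le
          rw [← dist_eq_norm]; exact hy
  have hmem : x ∈ Metric.closedBall θ ‖x - θ‖ := by
    rw [Metric.mem_closedBall, dist_eq_norm]
  have hmem0 : θ ∈ Metric.closedBall θ ‖x - θ‖ := by
    rw [Metric.mem_closedBall, dist_self]; positivity
  have hmain := (convex_closedBall θ ‖x - θ‖).norm_image_sub_le_of_norm_hasFDerivWithin_le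
    key bound hmem0 hmem
  have heq : f x - f θ - φ θ (x - θ) - (1/2) * (Q (x - θ) (x - θ)) = g x - g θ := by
    simp only [hgdef]; simp; ring
  rw [heq]
  calc ‖g x - g θ‖ ≤ (c * ‖x - θ‖) * ‖x - θ‖ := hmain
    _ = c * ‖‖x - θ‖^2‖ := by
        rw [Real.norm_of_nonneg (by positivity)]; ring

lemma inner_coord {n : ℕ} (x y : EuclideanSpace ℝ (Fin n)) :
    ⟪x, y⟫ = ∑ i, x i * y i := by
  simp [PiLp.inner_apply, RCLike.inner_apply, mul_comm]

lemma normsq_coord {n : ℕ} (x : EuclideanSpace ℝ (Fin n)) :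
    ‖x‖^2 = ∑ i, (x i)^2 := by
  rw [← real_inner_self_eq_norm_sq, inner_coord]
  simp [sq]

lemma sum_sq_one {n : ℕ} (x : EuclideanSpace ℝ (Fin n)) (h : ‖x‖ = 1) :
    ∑ i, (x i)^2 = 1 := by
  rw [← normsq_coord, h]; norm_num

lemma eucl_decomp {n : ℕ} (x : EuclideanSpace ℝ (Fin n)) :
    x = ∑ i, x i • EuclideanSpace.single i (1:ℝ) := by
  have := (EuclideanSpace.basisFun (Fin n) ℝ).sum_repr x
  simpa [EuclideanSpace.basisFun_repr, EuclideanSpace.basisFun_apply] using this.symm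

lemma clm2_coord {n : ℕ} (Q : EuclideanSpace ℝ (Fin n) →L[ℝ] EuclideanSpace ℝ (Fin n) →L[ℝ] ℝ)
    (v w : EuclideanSpace ℝ (Fin n)) :
    Q v w = ∑ i, ∑ k, v i * w k *
      (Q (EuclideanSpace.single i 1) (EuclideanSpace.single k 1)) := by
  have h2 : ∀ u : EuclideanSpace ℝ (Fin n), Q u w
      = ∑ k, w k * Q u (EuclideanSpace.single k 1) := by
    intro u
    conv_lhs => rw [eucl_decomp w]
    rw [map_sum]
    exact Finset.sum_congr rfl fun k _ => by rw [_root_.map_smul, smul_eq_mul]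
  rw [h2]
  have h1 : ∀ k, Q v (EuclideanSpace.single k 1)
      = ∑ i, v i * Q (EuclideanSpace.single i 1) (EuclideanSpace.single k 1) := by
    intro k
    conv_lhs => rw [eucl_decomp v]
    rw [map_sum, ContinuousLinearMap.sum_apply]
    exact Finset.sum_congr rfl fun i _ => by
      rw [_root_.map_smul, ContinuousLinearMap.smul_apply, smul_eq_mul]
  calc ∑ k, w k * Q v (EuclideanSpace.single k 1)
      = ∑ k, ∑ i, v i * w k * Q (EuclideanSpace.single i 1) (EuclideanSpace.single k 1) :=
        Finset.sum_congr rfl fun k _ => by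
          rw [h1 k, Finset.mul_sum]
          exact Finset.sum_congr rfl fun i _ => by ring
    _ = ∑ i, ∑ k, v i * w k * Q (EuclideanSpace.single i 1) (EuclideanSpace.single k 1) :=
        Finset.sum_comm

section helpers
variable {n : ℕ} (θ : Fin n → ℝ)

lemma proj_sum_sq (h1 : ∑ i, (θ i)^2 = 1) (x : Fin n → ℝ) :
    ∑ i, (x i - θ i * (∑ k, θ k * x k))^2 = ∑ i, (x i)^2 - (∑ k, θ k * x k)^2 := by
  have expand : ∀ i, (x i - θ i * (∑ k, θ k * x k))^2
      = (x i)^2 - 2*(∑ k, θ k * x k)*(θ i * x i) + (∑ k, θ k * x k)^2 * (θ i)^2 :=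
    fun i => by ring
  rw [Finset.sum_congr rfl (fun i _ => expand i), Finset.sum_add_distrib,
    Finset.sum_sub_distrib, ← Finset.mul_sum, ← Finset.mul_sum, h1]
  ring

variable {P : Matrix (Fin n) (Fin n) ℝ}
  (hP : ∀ i k, P i k = (if i = k then (1 : ℝ) else 0) - θ i * θ k)

include hP in
lemma P_mul_apply (A : Matrix (Fin n) (Fin n) ℝ) (i j : Fin n) :
    (P * A) i j = A i j - θ i * (∑ k, θ k * A k j) := by
  rw [Matrix.mul_apply]
  simp only [hP, sub_mul, ite_mul, one_mul, zero_mul, Finset.sum_sub_distrib,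
    Finset.sum_ite_eq, Finset.mem_univ, if_true, mul_assoc, ← Finset.mul_sum]

include hP in
lemma mul_P_apply (A : Matrix (Fin n) (Fin n) ℝ) (i j : Fin n) :
    (A * P) i j = A i j - (∑ k, θ k * A i k) * θ j := by
  rw [Matrix.mul_apply]
  simp only [hP, mul_sub, mul_ite, mul_one, mul_zero, Finset.sum_sub_distrib,
    Finset.sum_ite_eq', Finset.mem_univ, if_true]
  rw [Finset.sum_mul]
  congr 1
  exact Finset.sum_congr rfl fun k _ => by ring

include hP in
lemma frob_P_mul (h1 : ∑ i, (θ i)^2 = 1) (A : Matrix (Fin n) (Fin n) ℝ) :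
    frobNorm (P * A) ≤ frobNorm A := by
  apply Real.sqrt_le_sqrt
  have hL : ∑ i, ∑ j, ((P*A) i j)^2 = ∑ j, ∑ i, ((P*A) i j)^2 := Finset.sum_comm
  have hR : ∑ i : Fin n, ∑ j, (A i j)^2 = ∑ j, ∑ i, (A i j)^2 := Finset.sum_comm
  rw [hL, hR]
  apply Finset.sum_le_sum
  intro j _
  have := proj_sum_sq θ h1 (fun i => A i j)
  calc ∑ i, ((P*A) i j)^2 = ∑ i, ((fun i => A i j) i - θ i * (∑ k, θ k * (fun i => A i j) k))^2 := by
        refine Finset.sum_congr rfl fun i _ => ?_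
        rw [P_mul_apply θ hP A i j]
    _ = ∑ i, (A i j)^2 - (∑ k, θ k * A k j)^2 := this
    _ ≤ ∑ i, (A i j)^2 := by nlinarith [sq_nonneg (∑ k, θ k * A k j)]

include hP in
lemma frob_mul_P (h1 : ∑ i, (θ i)^2 = 1) (A : Matrix (Fin n) (Fin n) ℝ) :
    frobNorm (A * P) ≤ frobNorm A := by
  apply Real.sqrt_le_sqrt
  apply Finset.sum_le_sum
  intro i _
  have := proj_sum_sq θ h1 (fun j => A i j)
  calc ∑ j, ((A*P) i j)^2 = ∑ j, ((fun j => A i j) j - θ j * (∑ k, θ k * (fun j => A i j) k))^2 := by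
        refine Finset.sum_congr rfl fun j _ => ?_
        rw [mul_P_apply θ hP A i j, mul_comm (θ j)]
    _ = ∑ j, (A i j)^2 - (∑ k, θ k * A i k)^2 := this
    _ ≤ ∑ j, (A i j)^2 := by nlinarith [sq_nonneg (∑ k, θ k * A i k)]

end helpers

section qm
variable {n : ℕ} (θ v : Fin n → ℝ) {P : Matrix (Fin n) (Fin n) ℝ}
  (hP : ∀ i k, P i k = (if i = k then (1 : ℝ) else 0) - θ i * θ k)

include hP in
lemma Pd_mulVec (w : Fin n → ℝ) : P.mulVec w = w - (θ ⬝ᵥ w) • θ := by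
  funext i
  rw [Matrix.mulVec, dotProduct]
  simp only [hP, sub_mul, ite_mul, one_mul, zero_mul, Finset.sum_sub_distrib,
    Finset.sum_ite_eq, Finset.mem_univ, if_true, mul_assoc, ← Finset.mul_sum]
  simp [dotProduct, mul_comm]

include hP in
lemma qM_eq (H B M : Matrix (Fin n) (Fin n) ℝ) (c t : ℝ)
    (h1 : ∑ i, (θ i)^2 = 1)
    (hB : B = H - Matrix.diagonal (fun _ => c))
    (hM : M = P * B * P)
    (ht : t = θ ⬝ᵥ v) :
    M.mulVec v ⬝ᵥ v =
      H.mulVec v ⬝ᵥ v - t * (H.mulVec θ ⬝ᵥ v) - t * (H.mulVec v ⬝ᵥ θ)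
        + t^2 * (H.mulVec θ ⬝ᵥ θ) - c * (v ⬝ᵥ v - t^2) := by
  have hθθ : θ ⬝ᵥ θ = 1 := by
    rw [dotProduct, ← h1]
    exact Finset.sum_congr rfl fun i _ => (sq (θ i)).symm ▸ (pow_two (θ i)).symm
  have hBv : ∀ u, B.mulVec u = H.mulVec u - c • u := by
    intro u
    rw [hB, Matrix.sub_mulVec]
    congr 1
    funext i
    simp [Matrix.mulVec_diagonal]
  have e1 : M.mulVec v = P.mulVec (B.mulVec (P.mulVec v)) := by
    rw [hM, ← Matrix.mulVec_mulVec, ← Matrix.mulVec_mulVec]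
  have e2 : P.mulVec v = v - t • θ := by rw [Pd_mulVec θ hP, ht]
  have hPself : ∀ w, P.mulVec w ⬝ᵥ v = w ⬝ᵥ v - (θ ⬝ᵥ w) * t := by
    intro w
    rw [Pd_mulVec θ hP, sub_dotProduct, smul_dotProduct, smul_eq_mul, ← ht]
  rw [e1, hPself, e2, hBv, Matrix.mulVec_sub, Matrix.mulVec_smul]
  simp only [sub_dotProduct, smul_dotProduct, dotProduct_sub,
    dotProduct_smul, smul_eq_mul, hθθ, ← ht]
  rw [dotProduct_comm θ (H.mulVec v), dotProduct_comm θ (H.mulVec θ)]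
  ring
end qm

lemma one_sub_cos_le (t : ℝ) : 1 - Real.cos t ≤ t^2/2 := by
  have h : Real.cos t = 1 - 2*Real.sin (t/2)^2 := by
    rw [show t = 2*(t/2) by ring, Real.cos_two_mul', Real.cos_sq']
    ring_nf
  have h2 : Real.sin (t/2)^2 ≤ (t/2)^2 := Real.sin_sq_le_sq
  rw [h]; nlinarith

lemma q_expand {n : ℕ} (D : Matrix (Fin n) (Fin n) ℝ) (a b : ℝ) (x y : Fin n → ℝ) :
    D.mulVec (a • x + b • y) ⬝ᵥ (a • x + b • y)
      = a^2 * (D.mulVec x ⬝ᵥ x) + a*b*((D.mulVec x ⬝ᵥ y) + (D.mulVec y ⬝ᵥ x))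
        + b^2 * (D.mulVec y ⬝ᵥ y) := by
  simp only [Matrix.mulVec_add, Matrix.mulVec_smul, add_dotProduct,
    dotProduct_add, smul_dotProduct, dotProduct_smul, smul_eq_mul]
  ring

lemma tangent_q_zero {n : ℕ} (θ u : EuclideanSpace ℝ (Fin n)) (D : Matrix (Fin n) (Fin n) ℝ)
    (hθ : ‖θ‖ = 1) (hu : ‖u‖ = 1) (horth : ∑ i, θ i * u i = 0)
    (hlo : (fun θ' : EuclideanSpace ℝ (Fin n) =>
        D.mulVec (fun k => θ' k - θ k) ⬝ᵥ (fun k => θ' k - θ k))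
      =o[nhdsWithin θ (Metric.sphere (0 : EuclideanSpace ℝ (Fin n)) 1)]
        (fun θ' => ‖θ' - θ‖^2)) :
    D.mulVec (fun i => u i) ⬝ᵥ (fun i => u i) = 0 := by
  have hθ2 := sum_sq_one θ hθ
  have hu2 := sum_sq_one u hu
  set γ : ℝ → EuclideanSpace ℝ (Fin n) := fun t => Real.cos t • θ + Real.sin t • u with hγ
  have hγcoord : ∀ t i, γ t i = Real.cos t * θ i + Real.sin t * u i := fun t i => rfl
  have hγsq : ∀ t, ‖γ t‖^2 = 1 := by
    intro t
    rw [normsq_coord]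
    have : ∀ i, (γ t i)^2 = Real.cos t^2 * θ i^2 + 2*(Real.cos t*Real.sin t)*(θ i * u i)
        + Real.sin t^2 * u i^2 := fun i => by rw [hγcoord]; ring
    rw [Finset.sum_congr rfl fun i _ => this i, Finset.sum_add_distrib,
      Finset.sum_add_distrib, ← Finset.mul_sum, ← Finset.mul_sum, ← Finset.mul_sum,
      hθ2, hu2, horth]
    simpa using Real.sin_sq_add_cos_sq t
  have hγmem : ∀ t, γ t ∈ Metric.sphere (0 : EuclideanSpace ℝ (Fin n)) 1 := by
    intro t
    rw [mem_sphere_zero_iff_norm]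
    nlinarith [hγsq t, norm_nonneg (γ t)]
  have hγ0 : γ 0 = θ := by simp [hγ]
  have hγtendsto : Filter.Tendsto γ (nhdsWithin 0 (Set.Ioi 0))
      (nhdsWithin θ (Metric.sphere (0 : EuclideanSpace ℝ (Fin n)) 1)) := by
    apply tendsto_nhdsWithin_of_tendsto_nhds_of_eventually_within
    · have hc : Continuous γ :=
        (Real.continuous_cos.smul continuous_const).add
          (Real.continuous_sin.smul continuous_const)
      have := hc.tendsto 0
      rw [hγ0] at this
      exact this.mono_left nhdsWithin_le_nhds
    · exact Filter.Eventually.of_forall fun t => hγmem t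
  have h2 := hlo.comp_tendsto hγtendsto
  -- rewrite composition in coordinates
  set qθ := D.mulVec (fun i => θ i) ⬝ᵥ (fun i => θ i) with hqθ
  set qu := D.mulVec (fun i => u i) ⬝ᵥ (fun i => u i) with hqu
  set X := (D.mulVec (fun i => θ i) ⬝ᵥ (fun i => u i)) + (D.mulVec (fun i => u i) ⬝ᵥ (fun i => θ i)) with hX
  have hval : ∀ t, D.mulVec (fun k => γ t k - θ k) ⬝ᵥ (fun k => γ t k - θ k)
      = (Real.cos t - 1)^2 * qθ + (Real.cos t - 1)*Real.sin t * X + Real.sin t^2 * qu := by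
    intro t
    have hfun : (fun k => γ t k - θ k)
        = (Real.cos t - 1) • (fun i => θ i) + Real.sin t • (fun i => u i) := by
      funext k
      simp only [Pi.add_apply, Pi.smul_apply, smul_eq_mul, hγcoord]
      ring
    rw [hfun, q_expand]
  have hnorm : ∀ t, ‖γ t - θ‖^2 = 2*(1 - Real.cos t) := by
    intro t
    rw [normsq_coord]
    have : ∀ i, ((γ t - θ) i)^2 = (Real.cos t - 1)^2 * θ i^2
        + 2*((Real.cos t - 1)*Real.sin t)*(θ i * u i) + Real.sin t^2 * u i^2 := by
      intro i
      have : (γ t - θ) i = γ t i - θ i := rfl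
      rw [this, hγcoord]; ring
    rw [Finset.sum_congr rfl fun i _ => this i, Finset.sum_add_distrib,
      Finset.sum_add_distrib, ← Finset.mul_sum, ← Finset.mul_sum, ← Finset.mul_sum,
      hθ2, hu2, horth]
    nlinarith [Real.sin_sq_add_cos_sq t]
  have hXcont : Filter.Tendsto (fun t => Real.sin t * X) (nhdsWithin 0 (Set.Ioi 0)) (nhds 0) := by
    have hc : Continuous (fun t => Real.sin t * X) := Real.continuous_sin.mul continuous_const
    have := hc.tendsto 0
    simp only [Real.sin_zero, zero_mul] at this
    exact this.mono_left nhdsWithin_le_nhds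
  have hCcont : Filter.Tendsto (fun t => (Real.cos t - 1) * qθ) (nhdsWithin 0 (Set.Ioi 0)) (nhds 0) := by
    have hc : Continuous (fun t => (Real.cos t - 1) * qθ) :=
      (Real.continuous_cos.sub continuous_const).mul continuous_const
    have := hc.tendsto 0
    simp only [Real.cos_zero, sub_self, zero_mul] at this
    exact this.mono_left nhdsWithin_le_nhds
  have hO : (fun t : ℝ => Real.cos t - 1) =O[nhdsWithin 0 (Set.Ioi 0)] fun t : ℝ => t^2 := by
    apply IsBigO.of_bound (1/2)
    refine Filter.Eventually.of_forall fun t => ?_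
    rw [Real.norm_eq_abs, Real.norm_eq_abs, abs_of_nonpos (by nlinarith [Real.cos_le_one t]),
      abs_of_nonneg (sq_nonneg t)]
    nlinarith [one_sub_cos_le t]
  have hBig : (fun t : ℝ => ‖γ t - θ‖^2) =O[nhdsWithin 0 (Set.Ioi 0)] (fun t : ℝ => t^2) := by
    apply IsBigO.of_bound 1
    refine Filter.Eventually.of_forall fun t => ?_
    rw [hnorm t, Real.norm_eq_abs, Real.norm_eq_abs,
      abs_of_nonneg (by nlinarith [Real.cos_le_one t]), abs_of_nonneg (sq_nonneg t)]
    nlinarith [one_sub_cos_le t]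
  have h3 : (fun t => (Real.cos t - 1)^2*qθ + (Real.cos t - 1)*Real.sin t*X + Real.sin t^2*qu)
      =o[nhdsWithin 0 (Set.Ioi 0)] (fun t : ℝ => t^2) := by
    have h2' := h2.congr' (Filter.Eventually.of_forall fun t => hval t)
      (Filter.Eventually.of_forall fun _ => rfl)
    exact h2'.trans_isBigO hBig
  have hterm1 : (fun t => (Real.cos t - 1)^2*qθ) =o[nhdsWithin 0 (Set.Ioi 0)] (fun t : ℝ => t^2) := by
    have := hO.mul_isLittleO ((isLittleO_one_iff ℝ).2 hCcont)
    refine this.congr (fun t => by ring) (fun t => by rw [mul_one])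
  have hterm2 : (fun t => (Real.cos t - 1)*Real.sin t*X) =o[nhdsWithin 0 (Set.Ioi 0)]
      (fun t : ℝ => t^2) := by
    have := hO.mul_isLittleO ((isLittleO_one_iff ℝ).2 hXcont)
    refine this.congr (fun t => by ring) (fun t => by rw [mul_one])
  have h4 : (fun t => Real.sin t^2 * qu) =o[nhdsWithin 0 (Set.Ioi 0)] (fun t : ℝ => t^2) := by
    have := (h3.sub hterm1).sub hterm2
    refine this.congr (fun t => by ring) (fun t => rfl)
  have hOsin : (fun t : ℝ => t^2) =O[nhdsWithin 0 (Set.Ioi 0)] (fun t => Real.sin t^2) := by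
    apply IsBigO.of_bound (16/9)
    filter_upwards [Ioc_mem_nhdsGT_of_mem (by norm_num : (0:ℝ) ∈ Set.Ico (0:ℝ) 1)] with t ht
    obtain ⟨ht0, ht1⟩ := ht
    have hs := Real.sin_gt_sub_cube ht0
    have ht2 : t^2 ≤ 1 := by nlinarith
    have ht3 : t^3 ≤ t := by nlinarith [mul_le_mul_of_nonneg_left ht2 ht0.le]
    have h34 : (3/4)*t ≤ Real.sin t := by nlinarith
    rw [Real.norm_eq_abs, Real.norm_eq_abs, abs_of_nonneg (sq_nonneg _),
      abs_of_nonneg (sq_nonneg _)]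
    nlinarith [h34, ht0.le]
  have h5 := h4.trans_isBigO hOsin
  have h6 := (isLittleO_iff_tendsto' (by
    refine Filter.Eventually.of_forall fun t h => ?_
    rw [h, zero_mul])).1 h5
  have hev2 : ∀ᶠ t in nhdsWithin (0:ℝ) (Set.Ioi 0),
      Real.sin t^2*qu / Real.sin t^2 = qu := by
    filter_upwards [Ioc_mem_nhdsGT_of_mem (by norm_num : (0:ℝ) ∈ Set.Ico (0:ℝ) 1)] with t ht
    obtain ⟨ht0, ht1⟩ := ht
    have hπ : (1:ℝ) < Real.pi := by linarith [Real.pi_gt_three]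
    have hsin : Real.sin t ≠ 0 :=
      ne_of_gt (Real.sin_pos_of_pos_of_lt_pi ht0 (lt_of_le_of_lt ht1 hπ))
    field_simp
  have h7 : Filter.Tendsto (fun _ : ℝ => qu) (nhdsWithin 0 (Set.Ioi 0)) (nhds 0) :=
    Filter.Tendsto.congr' hev2 h6
  have : qu = 0 := tendsto_nhds_unique tendsto_const_nhds h7
  exact this

-- symmetric transfer
lemma symm_transfer {n : ℕ} {D : Matrix (Fin n) (Fin n) ℝ} (hD : D.IsSymm)
    (x y : Fin n → ℝ) : D.mulVec x ⬝ᵥ y = x ⬝ᵥ D.mulVec y := by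
  rw [Matrix.dotProduct_mulVec]
  congr 1
  rw [← Matrix.mulVec_transpose, hD]

lemma polarization {n : ℕ} {D : Matrix (Fin n) (Fin n) ℝ} (hD : D.IsSymm)
    {θ : Fin n → ℝ}
    (hq : ∀ u : Fin n → ℝ, θ ⬝ᵥ u = 0 → D.mulVec u ⬝ᵥ u = 0)
    (x y : Fin n → ℝ) (hx : θ ⬝ᵥ x = 0) (hy : θ ⬝ᵥ y = 0) :
    x ⬝ᵥ D.mulVec y = 0 := by
  have hxy : θ ⬝ᵥ (x + y) = 0 := by rw [dotProduct_add, hx, hy, add_zero]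
  have h1 := hq (x + y) hxy
  have h2 := hq x hx
  have h3 := hq y hy
  have hexp : D.mulVec (x + y) ⬝ᵥ (x + y)
      = D.mulVec x ⬝ᵥ x + (D.mulVec x ⬝ᵥ y + D.mulVec y ⬝ᵥ x) + D.mulVec y ⬝ᵥ y := by
    simp only [Matrix.mulVec_add, add_dotProduct, dotProduct_add]
    ring
  have hsym : D.mulVec y ⬝ᵥ x = D.mulVec x ⬝ᵥ y := by
    rw [symm_transfer hD, dotProduct_comm]
  have : D.mulVec x ⬝ᵥ y = 0 := by
    rw [hexp, h2, h3, hsym] at h1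
    linarith
  rw [← symm_transfer hD]
  exact this

section pentries
variable {n : ℕ} (θ : Fin n → ℝ) {P : Matrix (Fin n) (Fin n) ℝ}
  (hP : ∀ i k, P i k = (if i = k then (1 : ℝ) else 0) - θ i * θ k)

include hP in
lemma P_row_tangent (h1 : ∑ i, (θ i)^2 = 1) (i : Fin n) :
    θ ⬝ᵥ (fun j => P i j) = 0 := by
  rw [dotProduct]
  simp only [hP, mul_sub, mul_ite, mul_one, mul_zero, Finset.sum_sub_distrib,
    Finset.sum_ite_eq', Finset.sum_ite_eq, Finset.mem_univ, if_true]
  have : ∑ j, θ j * (θ i * θ j) = θ i * ∑ j, (θ j)^2 := by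
    rw [Finset.mul_sum]
    exact Finset.sum_congr rfl fun j _ => by ring
  rw [this, h1, mul_one, sub_self]

include hP in
lemma P_symm_entry (a b : Fin n) : P a b = P b a := by
  rw [hP, hP]
  by_cases h : a = b
  · subst h; ring
  · rw [if_neg h, if_neg (Ne.symm h)]; ring

include hP in
lemma PDP_entry (D : Matrix (Fin n) (Fin n) ℝ) (i k : Fin n) :
    (P * D * P) i k = (fun j => P i j) ⬝ᵥ D.mulVec (fun l => P k l) := by
  rw [Matrix.mul_assoc, Matrix.mul_apply]
  rw [dotProduct]
  refine Finset.sum_congr rfl fun j _ => ?_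
  congr 1
  rw [Matrix.mul_apply, Matrix.mulVec, dotProduct]
  refine Finset.sum_congr rfl fun l _ => ?_
  rw [P_symm_entry θ hP k l]

include hP in
lemma P_idem (h1 : ∑ i, (θ i)^2 = 1) : P * P = P := by
  ext i j
  rw [Matrix.mul_apply]
  simp only [hP, sub_mul, ite_mul, one_mul, zero_mul, mul_sub, mul_ite, mul_one, mul_zero,
    Finset.sum_sub_distrib, Finset.sum_ite_eq, Finset.sum_ite_eq', Finset.mem_univ, if_true]
  have : ∑ k, θ i * θ k * (θ k * θ j) = (θ i * θ j) * ∑ k, (θ k)^2 := by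
    rw [Finset.mul_sum]
    exact Finset.sum_congr rfl fun k _ => by ring
  rw [this, h1]
  ring
end pentries

end AuxLemmas

section Main
open Matrix

set_option maxHeartbeats 2000000 in
/-- The intrinsic second derivative of `f` on the sphere at `θ` is the orthogonal
projection `P B P` of `B = f''(θ) - ⟨θ, ∇f(θ)⟩ I`, i.e. it satisfies the spherical
second order Taylor expansion, it has minimal Hilbert–Schmidt norm among all symmetric
matrices satisfying this expansion, and its norm is bounded by that of `B`. -/
theorem stmt_11 (n : ℕ) (f : EuclideanSpace ℝ (Fin n) → ℝ) (hf : ContDiff ℝ 2 f)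
    (θ : EuclideanSpace ℝ (Fin n)) (hθ : ‖θ‖ = 1)
    (H : Matrix (Fin n) (Fin n) ℝ)
    (hH : ∀ i k, H i k =
      iteratedFDeriv ℝ 2 f θ ![EuclideanSpace.single i 1, EuclideanSpace.single k 1])
    (g : EuclideanSpace ℝ (Fin n)) (hg : g = gradient f θ)
    (P : Matrix (Fin n) (Fin n) ℝ)
    (hP : ∀ i k, P i k = (if i = k then (1 : ℝ) else 0) - θ i * θ k)
    (B M : Matrix (Fin n) (Fin n) ℝ)
    (hB : B = H - Matrix.diagonal (fun _ => ⟪θ, g⟫))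
    (hM : M = P * B * P)
    (S : Set (Matrix (Fin n) (Fin n) ℝ))
    (hS : S = {C | C.IsSymm ∧
      (fun θ' : EuclideanSpace ℝ (Fin n) =>
          f θ' - f θ - (∑ i, (g i - ⟪g, θ⟫ * θ i) * (θ' i - θ i)) -
            (1 / 2) * ∑ i, (∑ k, C i k * (θ' k - θ k)) * (θ' i - θ i))
        =o[nhdsWithin θ (Metric.sphere (0 : EuclideanSpace ℝ (Fin n)) 1)]
          (fun θ' => ‖θ' - θ‖ ^ 2)}) :
    M ∈ S ∧ (∀ C ∈ S, frobNorm M ≤ frobNorm C) ∧ frobNorm M ≤ frobNorm B := by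
  classical
  have hθ1 : ∑ i, (θ i)^2 = 1 := sum_sq_one θ hθ
  set c : ℝ := ⟪θ, g⟫ with hc
  set θd : Fin n → ℝ := fun i => θ i with hθd
  have hθd1 : ∑ i, (θd i)^2 = 1 := hθ1
  have hPd : ∀ i k, P i k = (if i = k then (1 : ℝ) else 0) - θd i * θd k := hP
  -- Part 3
  have hMB : frobNorm M ≤ frobNorm B := by
    rw [hM]
    calc frobNorm (P * B * P) ≤ frobNorm (P * B) := frob_mul_P θd hPd hθd1 (P * B)
      _ ≤ frobNorm B := frob_P_mul θd hPd hθd1 B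
  -- second derivative and symmetry
  set Q := fderiv ℝ (fderiv ℝ f) θ with hQdef
  have hHQ : ∀ i k, H i k = Q (EuclideanSpace.single i 1) (EuclideanSpace.single k 1) := by
    intro i k
    rw [hH i k, iteratedFDeriv_two_apply]
    simp
    rfl
  have hQsymm : ∀ v w, Q v w = Q w v := hf.contDiffAt.isSymmSndFDerivAt (by norm_num)
  have hHsymm : H.IsSymm := by
    show H.transpose = H
    ext i k
    rw [Matrix.transpose_apply, hHQ k i, hHQ i k]
    exact hQsymm _ _
  have hPsymmM : P.IsSymm := by
    show P.transpose = P
    ext i k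
    rw [Matrix.transpose_apply]
    exact P_symm_entry θd hPd k i
  have hBsymm : B.IsSymm := by
    show B.transpose = B
    rw [hB, Matrix.transpose_sub, Matrix.diagonal_transpose, hHsymm]
  have hMsymm : M.IsSymm := by
    show M.transpose = M
    rw [hM, Matrix.transpose_mul, Matrix.transpose_mul, hPsymmM, hBsymm, Matrix.mul_assoc]
  -- coordinates
  have hQcoord : ∀ v w : EuclideanSpace ℝ (Fin n),
      Q v w = ∑ i, (∑ k, H i k * w k) * v i := by
    intro v w
    rw [clm2_coord]
    refine Finset.sum_congr rfl fun i _ => ?_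
    rw [Finset.sum_mul]
    refine Finset.sum_congr rfl fun k _ => ?_
    rw [hHQ i k]
    ring
  have hgradcoord : ∀ v : EuclideanSpace ℝ (Fin n), fderiv ℝ f θ v = ∑ i, g i * v i := by
    intro v
    have h : ⟪g, v⟫ = fderiv ℝ f θ v := by
      rw [hg, gradient]
      exact InnerProductSpace.toDual_symm_apply
    rw [← h, PiLp.inner_apply]
    simp [RCLike.inner_apply]
    exact Finset.sum_congr rfl fun i _ => mul_comm _ _
  -- Taylor expansion restricted to the sphere
  have hRo := (taylor2 f hf θ).mono
    (nhdsWithin_le_nhds : nhdsWithin θ (Metric.sphere (0 : EuclideanSpace ℝ (Fin n)) 1) ≤ _)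
  -- the correction term
  set w1 : Fin n → ℝ := H.mulVec θd with hw1
  set w2 : Fin n → ℝ := Matrix.vecMul θd H with hw2
  set u3 : ℝ := H.mulVec θd ⬝ᵥ θd with hu3
  set E : EuclideanSpace ℝ (Fin n) → ℝ := fun θ' =>
    -(1/4) * (∑ i, (w1 i + w2 i) * (θ' i - θ i)) - ‖θ' - θ‖^2 * (u3 + c)/8 with hE
  have hcoordcont : ∀ i : Fin n, Continuous fun θ' : EuclideanSpace ℝ (Fin n) => θ' i :=
    fun i => (continuous_apply i).comp (PiLp.continuous_ofLp 2 (fun _ : Fin n => ℝ))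
  have hEcont : Continuous E := by
    apply Continuous.sub
    · exact continuous_const.mul (continuous_finset_sum _ fun i _ =>
        continuous_const.mul ((hcoordcont i).sub continuous_const))
    · exact Continuous.div_const (Continuous.mul
        (((continuous_id.sub continuous_const).norm).pow 2) continuous_const) 8
  have hE0 : E θ = 0 := by simp [hE]
  have hEtendsto : Filter.Tendsto E
      (nhdsWithin θ (Metric.sphere (0 : EuclideanSpace ℝ (Fin n)) 1)) (nhds 0) := by
    have := hEcont.tendsto θ
    rw [hE0] at this
    exact this.mono_left nhdsWithin_le_nhds
  have hoE : (fun θ' => ‖θ' - θ‖^2 * E θ')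
      =o[nhdsWithin θ (Metric.sphere (0 : EuclideanSpace ℝ (Fin n)) 1)]
      (fun θ' => ‖θ' - θ‖^2) := by
    have := (isBigO_refl (fun θ' : EuclideanSpace ℝ (Fin n) => ‖θ' - θ‖^2)
      (nhdsWithin θ (Metric.sphere (0 : EuclideanSpace ℝ (Fin n)) 1))).mul_isLittleO
      ((isLittleO_one_iff ℝ).2 hEtendsto)
    exact this.congr (fun θ' => rfl) (fun θ' => by rw [mul_one])
  have hsum := hRo.add hoE
  -- the eventual equality
  have hTeq : ∀ θ' : EuclideanSpace ℝ (Fin n), θ' ∈ Metric.sphere (0 : EuclideanSpace ℝ (Fin n)) 1 →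
      f θ' - f θ - (∑ i, (g i - ⟪g, θ⟫ * θ i) * (θ' i - θ i)) -
        (1 / 2) * ∑ i, (∑ k, M i k * (θ' k - θ k)) * (θ' i - θ i)
      = (f θ' - f θ - fderiv ℝ f θ (θ' - θ) -
          (1/2) * (fderiv ℝ (fderiv ℝ f) θ (θ' - θ) (θ' - θ))) + ‖θ' - θ‖^2 * E θ' := by
    intro θ' hmem
    set v : Fin n → ℝ := fun k => θ' k - θ k with hv
    have hθ'1 : ∑ i, (θ' i)^2 = 1 := sum_sq_one θ' (mem_sphere_zero_iff_norm.1 hmem)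
    have hvv : v ⬝ᵥ v = ∑ i, (v i)^2 := by
      rw [dotProduct]
      exact Finset.sum_congr rfl fun i _ => (sq (v i)).symm ▸ (pow_two (v i)).symm
    have ht : θd ⬝ᵥ v = -(v ⬝ᵥ v)/2 := by
      have hterm : ∀ i, (θ' i)^2 = (θ i)^2 + 2*(θ i * v i) + (v i)^2 := by
        intro i
        show (θ' i)^2 = (θ i)^2 + 2*(θ i * (θ' i - θ i)) + (θ' i - θ i)^2
        ring
      have hsummed : ∑ i, (θ' i)^2
          = ∑ i, (θ i)^2 + 2*(∑ i, θ i * v i) + ∑ i, (v i)^2 := by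
        rw [Finset.sum_congr rfl fun i _ => hterm i, Finset.sum_add_distrib,
          Finset.sum_add_distrib, ← Finset.mul_sum]
      rw [hθ'1, hθ1] at hsummed
      have : θd ⬝ᵥ v = ∑ i, θ i * v i := rfl
      rw [this, hvv]
      linarith
    have hqM := qM_eq θd v hPd H B M c (θd ⬝ᵥ v) hθd1 hB hM rfl
    have a1 : fderiv ℝ f θ (θ' - θ) = ∑ i, g i * (θ' i - θ i) := hgradcoord (θ' - θ)
    have a2 : fderiv ℝ (fderiv ℝ f) θ (θ' - θ) (θ' - θ)
        = ∑ i, (∑ k, H i k * (θ' k - θ k)) * (θ' i - θ i) := hQcoord (θ' - θ) (θ' - θ)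
    have a3 : ∑ i, (∑ k, M i k * (θ' k - θ k)) * (θ' i - θ i) = M.mulVec v ⬝ᵥ v := rfl
    have a2' : ∑ i, (∑ k, H i k * (θ' k - θ k)) * (θ' i - θ i) = H.mulVec v ⬝ᵥ v := rfl
    have a4 : ∑ i, (g i - ⟪g, θ⟫ * θ i) * (θ' i - θ i)
        = (∑ i, g i * (θ' i - θ i)) - c * (θd ⬝ᵥ v) := by
      have hgθ : (⟪g, θ⟫ : ℝ) = c := by rw [hc]; exact (real_inner_comm g θ).symm
      simp only [sub_mul, Finset.sum_sub_distrib, hgθ]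
      congr 1
      have : θd ⬝ᵥ v = ∑ i, θ i * v i := rfl
      rw [this, Finset.mul_sum]
      exact Finset.sum_congr rfl fun i _ => by ring
    have a5 : ‖θ' - θ‖^2 = v ⬝ᵥ v := by rw [normsq_coord (θ' - θ), hvv]; rfl
    have a6 : ∑ i, (w1 i + w2 i) * (θ' i - θ i)
        = (H.mulVec θd ⬝ᵥ v) + (H.mulVec v ⬝ᵥ θd) := by
      have h1 : ∑ i, (w1 i + w2 i) * (θ' i - θ i) = w1 ⬝ᵥ v + w2 ⬝ᵥ v := by
        rw [dotProduct, dotProduct, ← Finset.sum_add_distrib]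
        exact Finset.sum_congr rfl fun i _ => by rw [add_mul]
      rw [h1, hw1, hw2]
      congr 1
      rw [← Matrix.dotProduct_mulVec, dotProduct_comm]
    rw [a1, a2, a3, a2', a4, a5, hE]
    simp only [a6, a5]
    rw [hqM, ht]
    ring
  refine ⟨?_, ?_, hMB⟩
  · rw [hS]
    refine ⟨hMsymm, ?_⟩
    refine hsum.congr' ?_ (Filter.Eventually.of_forall fun _ => rfl)
    filter_upwards [self_mem_nhdsWithin] with θ' hmem
    exact (hTeq θ' hmem).symm
  · -- minimality
    intro C hC
    rw [hS] at hC
    obtain ⟨hCsymm, hCo⟩ := hC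
    have hMo : (fun θ' : EuclideanSpace ℝ (Fin n) =>
        f θ' - f θ - (∑ i, (g i - ⟪g, θ⟫ * θ i) * (θ' i - θ i)) -
          (1 / 2) * ∑ i, (∑ k, M i k * (θ' k - θ k)) * (θ' i - θ i))
        =o[nhdsWithin θ (Metric.sphere (0 : EuclideanSpace ℝ (Fin n)) 1)]
          (fun θ' => ‖θ' - θ‖ ^ 2) := by
      refine hsum.congr' ?_ (Filter.Eventually.of_forall fun _ => rfl)
      filter_upwards [self_mem_nhdsWithin] with θ' hmem
      exact (hTeq θ' hmem).symm
    set D : Matrix (Fin n) (Fin n) ℝ := C - M with hD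
    have hDsymm : D.IsSymm := by
      show D.transpose = D
      rw [hD, Matrix.transpose_sub, hCsymm, hMsymm]
    have hdiff : (fun θ' : EuclideanSpace ℝ (Fin n) =>
        D.mulVec (fun k => θ' k - θ k) ⬝ᵥ (fun k => θ' k - θ k))
        =o[nhdsWithin θ (Metric.sphere (0 : EuclideanSpace ℝ (Fin n)) 1)]
          (fun θ' => ‖θ' - θ‖^2) := by
      have h0 := (hMo.sub hCo).const_mul_left 2
      refine h0.congr (fun θ' => ?_) (fun θ' => rfl)
      have e1 : D.mulVec (fun k => θ' k - θ k) ⬝ᵥ (fun k => θ' k - θ k)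
          = C.mulVec (fun k => θ' k - θ k) ⬝ᵥ (fun k => θ' k - θ k)
            - M.mulVec (fun k => θ' k - θ k) ⬝ᵥ (fun k => θ' k - θ k) := by
        rw [hD, Matrix.sub_mulVec, sub_dotProduct]
      have e2 : ∑ i, (∑ k, C i k * (θ' k - θ k)) * (θ' i - θ i)
          = C.mulVec (fun k => θ' k - θ k) ⬝ᵥ (fun k => θ' k - θ k) := rfl
      have e3 : ∑ i, (∑ k, M i k * (θ' k - θ k)) * (θ' i - θ i)
          = M.mulVec (fun k => θ' k - θ k) ⬝ᵥ (fun k => θ' k - θ k) := rfl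
      rw [e1, ← e2, ← e3]
      ring
    have hq1 : ∀ u : Fin n → ℝ, θd ⬝ᵥ u = 0 → D.mulVec u ⬝ᵥ u = 0 := by
      intro u hu
      by_cases h0 : u = 0
      · rw [h0]
        simp
      · have hex : ∃ i, u i ≠ 0 := Function.ne_iff.1 h0
        set s : ℝ := Real.sqrt (∑ i, (u i)^2) with hs
        have hspos : 0 < s := by
          apply Real.sqrt_pos.2
          obtain ⟨i, hi⟩ := hex
          exact Finset.sum_pos' (fun j _ => sq_nonneg (u j))
            ⟨i, Finset.mem_univ i, by positivity⟩
        have hsne : s ≠ 0 := ne_of_gt hspos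
        set u' : EuclideanSpace ℝ (Fin n) :=
          (WithLp.equiv 2 (Fin n → ℝ)).symm (fun i => s⁻¹ * u i) with hu'
        have hu'coord : ∀ i, u' i = s⁻¹ * u i := fun i => rfl
        have hss : s^2 = ∑ i, (u i)^2 :=
          Real.sq_sqrt (Finset.sum_nonneg fun j _ => sq_nonneg (u j))
        have h2 : ‖u'‖^2 = 1 := by
          rw [normsq_coord]
          have hterm : ∀ i, (u' i)^2 = s⁻¹^2 * (u i)^2 := fun i => by rw [hu'coord]; ring
          rw [Finset.sum_congr rfl fun i _ => hterm i, ← Finset.mul_sum, ← hss]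
          field_simp
        have hu'norm : ‖u'‖ = 1 := by
          have h3 : (0:ℝ) ≤ ‖u'‖ := norm_nonneg u'
          have h4 : (‖u'‖ - 1) * (‖u'‖ + 1) = 0 := by nlinarith [h2]
          rcases mul_eq_zero.1 h4 with h5 | h5
          · linarith
          · linarith
        have hu'orth : ∑ i, θ i * u' i = 0 := by
          have hterm : ∀ i, θ i * u' i = s⁻¹ * (θ i * u i) := fun i => by rw [hu'coord]; ring
          have hu2 : ∑ i, θ i * u i = 0 := hu
          rw [Finset.sum_congr rfl fun i _ => hterm i, ← Finset.mul_sum, hu2, mul_zero]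
        have hq0 := tangent_q_zero θ u' D hθ hu'norm hu'orth hdiff
        have hfn : (fun i => u' i) = s⁻¹ • u := funext fun i => hu'coord i
        rw [hfn, Matrix.mulVec_smul, smul_dotProduct, dotProduct_smul,
          smul_eq_mul, smul_eq_mul] at hq0
        have hfact : s⁻¹ * (s⁻¹ * (D.mulVec u ⬝ᵥ u)) = 0 := hq0
        have := mul_eq_zero.1 hfact
        rcases this with h5 | h5
        · exact absurd h5 (inv_ne_zero hsne)
        · rcases mul_eq_zero.1 h5 with h6 | h6
          · exact absurd h6 (inv_ne_zero hsne)
          · exact h6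
    have hPDP : P * D * P = 0 := by
      ext i k
      rw [PDP_entry θd hPd D i k]
      rw [Matrix.zero_apply]
      exact polarization hDsymm hq1 _ _ (P_row_tangent θd hPd hθd1 i)
        (P_row_tangent θd hPd hθd1 k)
    have hPP : P * P = P := P_idem θd hPd hθd1
    have hPMP : P * M * P = M := by
      rw [hM]
      calc P * (P * B * P) * P = (P * P) * B * (P * P) := by noncomm_ring
        _ = P * B * P := by rw [hPP]
    have hPCP : P * C * P = M := by
      have hsplit : P * C * P = P * M * P + P * D * P := by
        rw [hD]
        noncomm_ring
      rw [hsplit, hPDP, hPMP, add_zero]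
    calc frobNorm M = frobNorm (P * C * P) := by rw [hPCP]
      _ ≤ frobNorm (P * C) := frob_mul_P θd hPd hθd1 (P * C)
      _ ≤ frobNorm C := frob_P_mul θd hPd hθd1 C

end Main
end

section
/- Let p ≥ 2 and q = p/(p−1). Let f : ℝⁿ → ℝ be C^j-smooth. Then for every x ∈ ℝⁿ, the ℓ_q-norm of the generalized gradient of x ↦ |f^{(j−1)}(x)|_{op(q)} is at most |f^{(j)}(x)|_{op(q)}, where |T|_{op(q)} = sup{T[v₁,…,v_k] : |v_i|_p ≤ 1}. -/
/-- The `op(q)` operator norm of a `j`-multilinear form on `ℝⁿ`: the supremum of its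
values over vectors in the `ℓ_p` unit ball. -/
noncomputable def opq (p : ℝ) {n j : ℕ}
    (T : ContinuousMultilinearMap ℝ (fun _ : Fin j => (Fin n → ℝ)) ℝ) : ℝ :=
  ⨆ v : {v : Fin j → Fin n → ℝ // ∀ s, (∑ k, |v s k| ^ p) ^ (1 / p) ≤ 1},
    T (fun s => v.1 s)

noncomputable def lpn (p : ℝ) {n : ℕ} (w : Fin n → ℝ) : ℝ := (∑ k, |w k| ^ p) ^ (1 / p)

section auxlemmas

variable {p : ℝ} {n : ℕ}

lemma lpn_nonneg (w : Fin n → ℝ) : 0 ≤ lpn p w :=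
  Real.rpow_nonneg (Finset.sum_nonneg fun k _ => Real.rpow_nonneg (abs_nonneg _) _) _

lemma abs_le_lpn (hp : 0 < p) (w : Fin n → ℝ) (k : Fin n) : |w k| ≤ lpn p w := by
  have h1 : |w k| = (|w k| ^ p) ^ (1 / p) := by
    rw [← Real.rpow_mul (abs_nonneg _), mul_one_div, div_self hp.ne', Real.rpow_one]
  rw [h1]
  exact Real.rpow_le_rpow (Real.rpow_nonneg (abs_nonneg _) _)
    (Finset.single_le_sum (fun i _ => Real.rpow_nonneg (abs_nonneg _) _) (Finset.mem_univ k))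
    (by positivity)

lemma lpn_pos (hp : 0 < p) {w : Fin n → ℝ} (hw : w ≠ 0) : 0 < lpn p w := by
  obtain ⟨k, hk⟩ := Function.ne_iff.1 hw
  exact lt_of_lt_of_le (abs_pos.2 hk) (abs_le_lpn hp w k)

lemma lpn_zero (hp : 0 < p) : lpn p (0 : Fin n → ℝ) = 0 := by
  simp [lpn, Real.zero_rpow hp.ne', Real.zero_rpow (inv_ne_zero hp.ne')]

lemma lpn_smul (hp : 0 < p) {c : ℝ} (hc : 0 ≤ c) (w : Fin n → ℝ) :
    lpn p (c • w) = c * lpn p w := by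
  unfold lpn
  have h1 : ∀ k, |(c • w) k| ^ p = c ^ p * |w k| ^ p := fun k => by
    rw [Pi.smul_apply, smul_eq_mul, abs_mul, abs_of_nonneg hc,
      Real.mul_rpow hc (abs_nonneg _)]
  rw [Finset.sum_congr rfl fun k _ => h1 k, ← Finset.mul_sum,
    Real.mul_rpow (Real.rpow_nonneg hc _)
      (Finset.sum_nonneg fun k _ => Real.rpow_nonneg (abs_nonneg _) _),
    ← Real.rpow_mul hc, mul_one_div, div_self hp.ne', Real.rpow_one]

lemma lpn_neg (w : Fin n → ℝ) : lpn p (-w) = lpn p w := by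
  simp [lpn]

variable {j : ℕ}

lemma ball_zero (hp : 0 < p) :
    ∀ s : Fin j, (∑ k, |(fun _ : Fin j => (0 : Fin n → ℝ)) s k| ^ p) ^ (1 / p) ≤ 1 := by
  intro s
  simp [Real.zero_rpow hp.ne', Real.zero_rpow (inv_ne_zero hp.ne')]

lemma opq_bddAbove (hp : 0 < p) (T : ContinuousMultilinearMap ℝ (fun _ : Fin j => (Fin n → ℝ)) ℝ) :
    BddAbove (Set.range fun v : {v : Fin j → Fin n → ℝ //
      ∀ s, (∑ k, |v s k| ^ p) ^ (1 / p) ≤ 1} => T (fun s => v.1 s)) := by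
  refine ⟨‖T‖, ?_⟩
  rintro y ⟨v, rfl⟩
  have hb : ∀ s, ‖v.1 s‖ ≤ 1 := by
    intro s
    rw [pi_norm_le_iff_of_nonneg zero_le_one]
    intro k
    exact (Real.norm_eq_abs _).le.trans ((abs_le_lpn hp (v.1 s) k).trans (v.2 s))
  calc T (fun s => v.1 s) ≤ |T (fun s => v.1 s)| := le_abs_self _
    _ ≤ ‖T‖ * ∏ s, ‖v.1 s‖ := T.le_opNorm _
    _ ≤ ‖T‖ * 1 := by
        refine mul_le_mul_of_nonneg_left ?_ (norm_nonneg T)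
        exact Finset.prod_le_one (fun s _ => norm_nonneg _) (fun s _ => hb s)
    _ = ‖T‖ := mul_one _

lemma le_opq (hp : 0 < p) (T : ContinuousMultilinearMap ℝ (fun _ : Fin j => (Fin n → ℝ)) ℝ)
    (v : Fin j → Fin n → ℝ) (hv : ∀ s, (∑ k, |v s k| ^ p) ^ (1 / p) ≤ 1) :
    T v ≤ opq p T := by
  have := le_ciSup (opq_bddAbove hp T) (⟨v, hv⟩ : {v : Fin j → Fin n → ℝ //
      ∀ s, (∑ k, |v s k| ^ p) ^ (1 / p) ≤ 1})
  simpa [opq] using this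

lemma opq_le (hp : 0 < p) (T : ContinuousMultilinearMap ℝ (fun _ : Fin j => (Fin n → ℝ)) ℝ)
    {c : ℝ} (hc : ∀ v : Fin j → Fin n → ℝ,
      (∀ s, (∑ k, |v s k| ^ p) ^ (1 / p) ≤ 1) → T v ≤ c) :
    opq p T ≤ c := by
  haveI : Nonempty {v : Fin j → Fin n → ℝ // ∀ s, (∑ k, |v s k| ^ p) ^ (1 / p) ≤ 1} :=
    ⟨⟨fun _ => 0, ball_zero hp⟩⟩
  exact ciSup_le fun v => hc _ v.2

lemma opq_nonneg {m : ℕ} (hp : 0 < p)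
    (T : ContinuousMultilinearMap ℝ (fun _ : Fin (m+1) => (Fin n → ℝ)) ℝ) :
    0 ≤ opq p T := by
  have h0 := le_opq hp T (fun _ => 0) (ball_zero hp)
  rwa [T.map_coord_zero (0 : Fin (m+1)) rfl] at h0

lemma abs_opq_sub_le (hp : 0 < p)
    (A B : ContinuousMultilinearMap ℝ (fun _ : Fin j => (Fin n → ℝ)) ℝ) {c : ℝ}
    (hc : ∀ v : Fin j → Fin n → ℝ,
      (∀ s, (∑ k, |v s k| ^ p) ^ (1 / p) ≤ 1) → |A v - B v| ≤ c) :
    |opq p A - opq p B| ≤ c := by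
  rw [abs_sub_le_iff]
  constructor
  · rw [sub_le_iff_le_add]
    refine opq_le hp A fun v hv => ?_
    have h1 : A v ≤ B v + c := by
      have := hc v hv
      have := le_of_abs_le this
      linarith
    exact h1.trans (by linarith [le_opq hp B v hv])
  · rw [sub_le_iff_le_add]
    refine opq_le hp B fun v hv => ?_
    have h1 : B v ≤ A v + c := by
      have := le_of_abs_le (abs_sub_comm (A v) (B v) ▸ hc v hv)
      linarith
    exact h1.trans (by linarith [le_opq hp A v hv])

lemma abs_opq_sub_le_norm (hp : 0 < p)
    (A B : ContinuousMultilinearMap ℝ (fun _ : Fin j => (Fin n → ℝ)) ℝ) :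
    |opq p A - opq p B| ≤ ‖A - B‖ := by
  refine abs_opq_sub_le hp A B fun v hv => ?_
  have hb : ∀ s, ‖v s‖ ≤ 1 := by
    intro s
    rw [pi_norm_le_iff_of_nonneg zero_le_one]
    intro k
    exact (Real.norm_eq_abs _).le.trans ((abs_le_lpn hp (v s) k).trans (hv s))
  calc |A v - B v| = |(A - B) v| := by rw [ContinuousMultilinearMap.sub_apply]
    _ ≤ ‖A - B‖ * ∏ s, ‖v s‖ := (A - B).le_opNorm v
    _ ≤ ‖A - B‖ * 1 := mul_le_mul_of_nonneg_left
        (Finset.prod_le_one (fun s _ => norm_nonneg _) (fun s _ => hb s)) (norm_nonneg _)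
    _ = ‖A - B‖ := mul_one _

lemma opq_cons_bound {m : ℕ} (hp : 0 < p)
    (T : ContinuousMultilinearMap ℝ (fun _ : Fin (m+1) => (Fin n → ℝ)) ℝ)
    (h : Fin n → ℝ) (v : Fin m → Fin n → ℝ)
    (hv : ∀ s, (∑ k, |v s k| ^ p) ^ (1 / p) ≤ 1) :
    |T (Fin.cons h v)| ≤ opq p T * lpn p h := by
  by_cases hz : h = 0
  · subst hz
    rw [T.map_coord_zero (0 : Fin (m+1)) (by simp), lpn_zero hp]
    simp
  · set c := (lpn p h)⁻¹ with hc
    have hlp : 0 < lpn p h := lpn_pos hp hz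
    have hcpos : 0 < c := inv_pos.2 hlp
    set u := c • h with hu
    have hlu : lpn p u = 1 := by
      rw [hu, lpn_smul hp hcpos.le, hc, inv_mul_cancel₀ hlp.ne']
    have hball : ∀ w : Fin n → ℝ, lpn p w ≤ 1 →
        (∀ s : Fin (m+1), (∑ k, |(Fin.cons w v : Fin (m+1) → Fin n → ℝ) s k| ^ p) ^ (1 / p) ≤ 1) := by
      intro w hw s
      refine Fin.cases ?_ ?_ s
      · simpa [lpn] using hw
      · intro i
        simpa [lpn] using hv i
    have hTu : T (Fin.cons u v) = c * T (Fin.cons h v) := by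
      have h1 : (Fin.cons u v : Fin (m+1) → Fin n → ℝ) =
          Function.update (Fin.cons h v) 0 (c • h) := by
        rw [Fin.update_cons_zero]
      rw [h1, T.map_update_smul (Fin.cons h v) 0 c h, Fin.update_cons_zero]
      simp
    have hTnu : T (Fin.cons (-u) v) = -(c * T (Fin.cons h v)) := by
      have h1 : (Fin.cons (-u) v : Fin (m+1) → Fin n → ℝ) =
          Function.update (Fin.cons u v) 0 ((-1 : ℝ) • u) := by
        rw [Fin.update_cons_zero]; congr 1; simp
      rw [h1, T.map_update_smul (Fin.cons u v) 0 (-1 : ℝ) u, Fin.update_cons_zero, hTu]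
      simp
    have b1 : T (Fin.cons u v) ≤ opq p T := le_opq hp T _ (hball u hlu.le)
    have b2 : T (Fin.cons (-u) v) ≤ opq p T :=
      le_opq hp T _ (hball (-u) (by rw [lpn_neg, hlu]))
    have habs : c * |T (Fin.cons h v)| ≤ opq p T := by
      rcases abs_cases (T (Fin.cons h v)) with ⟨he, _⟩ | ⟨he, _⟩
      · rw [he]; rw [hTu] at b1; exact b1
      · rw [he, mul_neg]; rw [hTnu] at b2; linarith
    calc |T (Fin.cons h v)| = (c * |T (Fin.cons h v)|) * lpn p h := by
          rw [hc]; field_simp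
      _ ≤ opq p T * lpn p h := mul_le_mul_of_nonneg_right habs (lpn_nonneg h)

end auxlemmas

/-- The `ℓ_q` modulus of the gradient (computed with respect to the `ℓ_p` metric) of
`x ↦ |f^{(j-1)}(x)|_{op(q)}` is bounded by `|f^{(j)}(x)|_{op(q)}`. -/
theorem stmt_13 (p : ℝ) (hp : 2 ≤ p) (q : ℝ) (hq : q = p / (p - 1))
    (n j : ℕ) (hj : 1 ≤ j) (f : (Fin n → ℝ) → ℝ) (hf : ContDiff ℝ (↑j : ℕ∞) f)
    (x : Fin n → ℝ) :
    Filter.limsup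
      (fun h : Fin n → ℝ =>
        |opq p (iteratedFDeriv ℝ (j - 1) f (x + h)) -
            opq p (iteratedFDeriv ℝ (j - 1) f x)| /
          (∑ k, |h k| ^ p) ^ (1 / p))
      (nhdsWithin 0 {0}ᶜ) ≤ opq p (iteratedFDeriv ℝ j f x) := by
  have hp0 : 0 < p := lt_of_lt_of_le two_pos hp
  obtain ⟨m, rfl⟩ : ∃ m, j = m + 1 := ⟨j - 1, (Nat.succ_pred_eq_of_pos hj).symm⟩
  change Filter.limsup
      (fun h : Fin n → ℝ =>
        |opq p (iteratedFDeriv ℝ m f (x + h)) -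
            opq p (iteratedFDeriv ℝ m f x)| /
          (∑ k, |h k| ^ p) ^ (1 / p))
      (nhdsWithin 0 {0}ᶜ) ≤ opq p (iteratedFDeriv ℝ (m + 1) f x)
  set G := iteratedFDeriv ℝ m f with hG
  set F := iteratedFDeriv ℝ (m + 1) f with hF
  have hG1 : ContDiff ℝ 1 G := hf.iteratedFDeriv_right (by
    rw [add_comm]; exact_mod_cast le_refl ((m : ℕ∞) + 1))
  have hFc : Continuous F := hf.continuous_iteratedFDeriv (le_refl _)
  -- trivial case: n = 0
  rcases Nat.eq_zero_or_pos n with hn | hn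
  · subst hn
    have hempty : ({0}ᶜ : Set (Fin 0 → ℝ)) = ∅ := by
      ext y; simp [Subsingleton.elim y 0]
    rw [hempty, nhdsWithin_empty, Filter.limsup_eq]
    have : {a : ℝ | ∀ᶠ h in (⊥ : Filter (Fin 0 → ℝ)),
        |opq p (G (x + h)) - opq p (G x)| / (∑ k, |h k| ^ p) ^ (1 / p) ≤ a} = Set.univ := by
      ext a; simp
    rw [this, Real.sInf_of_not_bddBelow not_bddBelow_univ]
    exact opq_nonneg hp0 _
  -- main case
  haveI : Nontrivial (Fin n → ℝ) :=
    ⟨0, fun _ => 1, fun hcon => by simpa using congrFun hcon ⟨0, hn⟩⟩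
  haveI : Filter.NeBot (nhdsWithin (0 : Fin n → ℝ) {0}ᶜ) :=
    Module.punctured_nhds_neBot ℝ (Fin n → ℝ) 0
  have key : ∀ ε > 0, Filter.limsup
      (fun h : Fin n → ℝ => |opq p (G (x + h)) - opq p (G x)| / (∑ k, |h k| ^ p) ^ (1 / p))
      (nhdsWithin 0 {0}ᶜ) ≤ opq p (F x) + ε := by
    intro ε hε
    refine Filter.limsup_le_of_le
      (Filter.isCoboundedUnder_le_of_le _ (x := 0) fun h =>
        div_nonneg (abs_nonneg _) (Real.rpow_nonneg
          (Finset.sum_nonneg fun k _ => Real.rpow_nonneg (abs_nonneg _) _) _)) ?_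
    -- find δ from continuity of F
    have hcF : ContinuousAt F x := hFc.continuousAt
    rw [Metric.continuousAt_iff] at hcF
    obtain ⟨δ, hδ0, hδ⟩ := hcF ε hε
    have h1 : ∀ᶠ h in nhdsWithin (0 : Fin n → ℝ) {0}ᶜ, dist h 0 < δ :=
      Filter.Eventually.filter_mono nhdsWithin_le_nhds
        (Metric.eventually_nhds_iff_ball.2 ⟨δ, hδ0, fun y hy => by
          simpa [Metric.mem_ball] using hy⟩)
    have h2 : ∀ᶠ h in nhdsWithin (0 : Fin n → ℝ) {0}ᶜ, h ∈ ({0}ᶜ : Set (Fin n → ℝ)) :=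
      eventually_mem_nhdsWithin
    filter_upwards [h1, h2] with h hdist hne
    have hhne : h ≠ 0 := hne
    have hlp : 0 < lpn p h := lpn_pos hp0 hhne
    -- the key estimate via MVT
    have hbound : |opq p (G (x + h)) - opq p (G x)| ≤ (opq p (F x) + ε) * lpn p h := by
      refine abs_opq_sub_le hp0 _ _ fun v hv => ?_
      -- derivative of ψ t = G (x + t • h) applied to v
      set L := ContinuousMultilinearMap.apply ℝ (fun _ : Fin m => (Fin n → ℝ)) ℝ v with hL
      have hψ : ∀ t : ℝ, HasDerivAt (fun t : ℝ => G (x + t • h) v)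
          (F (x + t • h) (Fin.cons h v)) t := by
        intro t
        have hline : HasDerivAt (fun t : ℝ => x + t • h) h t := by
          simpa using ((hasDerivAt_id t).smul_const h).const_add x
        have hGd : HasFDerivAt G (fderiv ℝ G (x + t • h)) (x + t • h) :=
          (hG1.differentiable one_ne_zero (x + t • h)).hasFDerivAt
        have h2' : HasDerivAt (fun t : ℝ => G (x + t • h)) (fderiv ℝ G (x + t • h) h) t :=
          hGd.comp_hasDerivAt t hline
        have h3 : HasDerivAt (fun t : ℝ => L (G (x + t • h)))
            (L (fderiv ℝ G (x + t • h) h)) t :=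
          L.hasFDerivAt.comp_hasDerivAt t h2'
        have h4 : L (fderiv ℝ G (x + t • h) h) = F (x + t • h) (Fin.cons h v) := by
          rw [hF, iteratedFDeriv_succ_apply_left]
          simp [hL, hG, Fin.tail_cons, ContinuousMultilinearMap.apply_apply]
        rw [h4] at h3
        exact h3
      have hC : ∀ t ∈ Set.Icc (0:ℝ) 1,
          ‖F (x + t • h) (Fin.cons h v)‖ ≤ (opq p (F x) + ε) * lpn p h := by
        intro t ht
        have hd : dist (x + t • h) x < δ := by
          rw [dist_eq_norm]
          have : ‖x + t • h - x‖ = |t| * ‖h‖ := by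
            rw [add_sub_cancel_left, norm_smul, Real.norm_eq_abs]
          rw [this]
          have ht1 : |t| ≤ 1 := abs_le.2 ⟨by linarith [ht.1], ht.2⟩
          have : |t| * ‖h‖ ≤ ‖h‖ := by
            calc |t| * ‖h‖ ≤ 1 * ‖h‖ := mul_le_mul_of_nonneg_right ht1 (norm_nonneg h)
              _ = ‖h‖ := one_mul _
          calc |t| * ‖h‖ ≤ ‖h‖ := this
            _ < δ := by rwa [dist_eq_norm, sub_zero] at hdist
        have hopq : opq p (F (x + t • h)) ≤ opq p (F x) + ε := by
          have := abs_opq_sub_le_norm hp0 (F (x + t • h)) (F x)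
          have hnorm : ‖F (x + t • h) - F x‖ < ε := by
            have := hδ hd
            rwa [dist_eq_norm] at this
          have := le_of_abs_le this
          linarith [this.trans hnorm.le]
        calc ‖F (x + t • h) (Fin.cons h v)‖ = |F (x + t • h) (Fin.cons h v)| :=
              Real.norm_eq_abs _
          _ ≤ opq p (F (x + t • h)) * lpn p h := opq_cons_bound hp0 _ h v hv
          _ ≤ (opq p (F x) + ε) * lpn p h :=
              mul_le_mul_of_nonneg_right hopq (lpn_nonneg h)
      have hmvt := Convex.norm_image_sub_le_of_norm_hasDerivWithin_le
        (f := fun t : ℝ => G (x + t • h) v)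
        (f' := fun t : ℝ => F (x + t • h) (Fin.cons h v))
        (fun t ht => (hψ t).hasDerivWithinAt) hC (convex_Icc 0 1)
        (Set.left_mem_Icc.2 zero_le_one) (Set.right_mem_Icc.2 zero_le_one)
      simp only [one_smul, zero_smul, add_zero, Real.norm_eq_abs] at hmvt
      calc |G (x + h) v - G x v| ≤ (opq p (F x) + ε) * lpn p h * |(1:ℝ) - 0| := hmvt
        _ = (opq p (F x) + ε) * lpn p h := by norm_num
    -- divide
    show |opq p (G (x + h)) - opq p (G x)| / (∑ k, |h k| ^ p) ^ (1 / p) ≤ opq p (F x) + ε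
    rw [show ((∑ k, |h k| ^ p) ^ (1 / p) : ℝ) = lpn p h from rfl, div_le_iff₀ hlp]
    exact hbound
  by_contra hcon
  push_neg at hcon
  have := key ((Filter.limsup
      (fun h : Fin n → ℝ => |opq p (G (x + h)) - opq p (G x)| / (∑ k, |h k| ^ p) ^ (1 / p))
      (nhdsWithin 0 {0}ᶜ) - opq p (F x)) / 2) (by linarith)
  linarith
end

section
/- Let X₁,…,Xₙ be independent random variables, X' an independent copy, and f ∈ L^∞. Define the j-th order L^∞ difference tensors 𝔥^{(j)}f with entries 𝔥_{i₁…i_j}f = ‖∏_{s=1}^j(Id − T_{i_s})f‖_{i₁,…,i_j,∞} for distinct indices and 0 otherwise, where T_i replaces X_i by X_i'. Then |𝔥⁺|𝔥^{(j)}f|_op| ≤ |𝔥^{(j+1)}f|_op pointwise, where 𝔥⁺_i g = ‖(g − T_i g)_+‖_{X_i',∞} and |𝔥⁺g| is the Euclidean norm of (𝔥⁺_1 g,…,𝔥⁺_n g). -/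
noncomputable section

/-- Nested difference `∏_{i ∈ l} (Id - T_i) f`, where `T_i` replaces the `i`-th
coordinate of `x` by the `i`-th coordinate of `x'`. -/
def nestDiff {n : ℕ} {𝒳 : Type*} :
    List (Fin n) → ((Fin n → 𝒳) → ℝ) → (Fin n → 𝒳) → (Fin n → 𝒳) → ℝ
  | [], f, x, _ => f x
  | i :: l, f, x, x' =>
      nestDiff l f x x' - nestDiff l f (Function.update x i (x' i)) x'

/-- The entry `𝔥_{i₁…i_j} f (x)`: the `L^∞` norm (here: supremum) over the coordinates
in `l` and their replacements of the nested difference. -/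
def hEntry {n : ℕ} {𝒳 : Type*} (f : (Fin n → 𝒳) → ℝ) (l : List (Fin n))
    (x : Fin n → 𝒳) : ℝ :=
  ⨆ z : Fin n → 𝒳, ⨆ z' : Fin n → 𝒳,
    |nestDiff l f (fun i => if i ∈ l then z i else x i) z'|

/-- The `j`-tensor `𝔥^{(j)} f (x)`, supported on tuples of distinct indices. -/
def hTensor {n : ℕ} {𝒳 : Type*} (f : (Fin n → 𝒳) → ℝ) (j : ℕ) (x : Fin n → 𝒳) :
    (Fin j → Fin n) → ℝ :=
  fun ι => if Function.Injective ι then hEntry f (List.ofFn ι) x else 0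

/-- The operator norm of a `j`-tensor on `ℝⁿ`. -/
def opNorm {n j : ℕ} (T : (Fin j → Fin n) → ℝ) : ℝ :=
  ⨆ v : {v : Fin j → Fin n → ℝ // ∀ s, ∑ k, (v s k) ^ 2 ≤ 1},
    ∑ ι : Fin j → Fin n, T ι * ∏ s, v.1 s (ι s)

/-- The one-sided difference operator `𝔥⁺_i g (x) = ‖(g - T_i g)₊‖_{X_i',∞}`. -/
def hPlus {n : ℕ} {𝒳 : Type*} (g : (Fin n → 𝒳) → ℝ) (i : Fin n)
    (x : Fin n → 𝒳) : ℝ :=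
  ⨆ y : 𝒳, max (g x - g (Function.update x i y)) 0

set_option linter.unusedSectionVars false

section Aux
variable {n : ℕ} {𝒳 : Type*}

lemma nestDiff_bound (f : (Fin n → 𝒳) → ℝ) (M : ℝ) (hf : ∀ x, |f x| ≤ M) :
    ∀ (l : List (Fin n)) (x x' : Fin n → 𝒳), |nestDiff l f x x'| ≤ 2 ^ l.length * M := by
  intro l
  induction l with
  | nil => intro x x'; simpa [nestDiff] using hf x
  | cons i l ih =>
    intro x x'
    have := abs_sub (nestDiff l f x x') (nestDiff l f (Function.update x i (x' i)) x')
    calc |nestDiff (i :: l) f x x'| ≤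
        |nestDiff l f x x'| + |nestDiff l f (Function.update x i (x' i)) x'| := by
          rw [nestDiff]; exact this
      _ ≤ 2 ^ l.length * M + 2 ^ l.length * M := add_le_add (ih _ _) (ih _ _)
      _ = 2 ^ (i :: l).length * M := by rw [List.length_cons]; ring

lemma nestDiff_congr (f : (Fin n → 𝒳) → ℝ) :
    ∀ (l : List (Fin n)) (x x' y' : Fin n → 𝒳), (∀ i ∈ l, x' i = y' i) →
      nestDiff l f x x' = nestDiff l f x y' := by
  intro l
  induction l with
  | nil => intro x x' y' _; rfl
  | cons i l ih =>
    intro x x' y' h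
    rw [nestDiff, nestDiff, ih x x' y' (fun k hk => h k (List.mem_cons_of_mem i hk)),
      h i List.mem_cons_self,
      ih (Function.update x i (y' i)) x' y' (fun k hk => h k (List.mem_cons_of_mem i hk))]

variable [Nonempty 𝒳]

lemma le_hEntry (f : (Fin n → 𝒳) → ℝ) (M : ℝ) (hf : ∀ x, |f x| ≤ M)
    (l : List (Fin n)) (x z z' : Fin n → 𝒳) :
    |nestDiff l f (fun i => if i ∈ l then z i else x i) z'| ≤ hEntry f l x := by
  have bdd1 : ∀ z : Fin n → 𝒳, BddAbove (Set.range fun z' : Fin n → 𝒳 =>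
      |nestDiff l f (fun i => if i ∈ l then z i else x i) z'|) := by
    intro z
    exact ⟨2 ^ l.length * M, by rintro _ ⟨z', rfl⟩; exact nestDiff_bound f M hf l _ z'⟩
  have bdd2 : BddAbove (Set.range fun z : Fin n → 𝒳 => ⨆ z' : Fin n → 𝒳,
      |nestDiff l f (fun i => if i ∈ l then z i else x i) z'|) := by
    refine ⟨2 ^ l.length * M, ?_⟩
    rintro _ ⟨z, rfl⟩
    exact ciSup_le fun z' => nestDiff_bound f M hf l _ z'
  exact le_trans (le_ciSup (bdd1 z) z') (le_ciSup bdd2 z)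

lemma hEntry_nonneg (f : (Fin n → 𝒳) → ℝ) (M : ℝ) (hf : ∀ x, |f x| ≤ M)
    (l : List (Fin n)) (x : Fin n → 𝒳) : 0 ≤ hEntry f l x :=
  le_trans (abs_nonneg _) (le_hEntry f M hf l x x x)

lemma hEntry_le (f : (Fin n → 𝒳) → ℝ) (l : List (Fin n)) (x : Fin n → 𝒳) (B : ℝ)
    (hB : ∀ z z' : Fin n → 𝒳,
      |nestDiff l f (fun i => if i ∈ l then z i else x i) z'| ≤ B) :
    hEntry f l x ≤ B :=
  ciSup_le fun z => ciSup_le fun z' => hB z z'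

lemma hEntry_update_mem (f : (Fin n → 𝒳) → ℝ) (l : List (Fin n)) (x : Fin n → 𝒳)
    {i : Fin n} (hi : i ∈ l) (y : 𝒳) :
    hEntry f l (Function.update x i y) = hEntry f l x := by
  unfold hEntry
  refine iSup_congr fun z => iSup_congr fun z' => ?_
  have he : (fun k => if k ∈ l then z k else Function.update x i y k) =
      (fun k => if k ∈ l then z k else x k) := by
    funext k
    by_cases hk : k ∈ l
    · simp [hk]
    · have : k ≠ i := fun h => hk (h ▸ hi)
      simp [hk, Function.update_of_ne this]
  rw [he]

lemma hEntry_sub_le (f : (Fin n → 𝒳) → ℝ) (M : ℝ) (hf : ∀ x, |f x| ≤ M)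
    (l : List (Fin n)) (x : Fin n → 𝒳) {i : Fin n} (hi : i ∉ l) (y : 𝒳) :
    hEntry f l x ≤ hEntry f l (Function.update x i y) + hEntry f (i :: l) x := by
  refine hEntry_le f l x _ (fun z z' => ?_)
  set A := nestDiff l f (fun k => if k ∈ l then z k else x k) z' with hA
  set B := nestDiff l f (fun k => if k ∈ l then z k else Function.update x i y k) z' with hB
  have key : nestDiff (i :: l) f
      (fun k => if k ∈ i :: l then Function.update z i (x i) k else x k)
      (Function.update z' i y) = A - B := by
    rw [nestDiff]
    have h1 : (fun k => if k ∈ i :: l then Function.update z i (x i) k else x k) =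
        (fun k => if k ∈ l then z k else x k) := by
      funext k
      rcases eq_or_ne k i with rfl | hk
      · simp [hi]
      · simp [List.mem_cons, hk, Function.update_of_ne hk]
    rw [h1, Function.update_self]
    have h3 : Function.update (fun k => if k ∈ l then z k else x k) i y =
        (fun k => if k ∈ l then z k else Function.update x i y k) := by
      funext k
      rcases eq_or_ne k i with rfl | hk
      · simp [hi]
      · simp [Function.update_of_ne hk]
    rw [h3]
    have h4 : ∀ W : Fin n → 𝒳, nestDiff l f W (Function.update z' i y) = nestDiff l f W z' := by
      intro W
      refine nestDiff_congr f l W _ _ (fun k hk => ?_)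
      have hk' : k ≠ i := fun h => hi (by rwa [h] at hk)
      exact Function.update_of_ne hk' y z'
    rw [h4, h4]
  calc |A| = |B + (A - B)| := by ring_nf
    _ ≤ |B| + |A - B| := abs_add_le _ _
    _ ≤ hEntry f l (Function.update x i y) + hEntry f (i :: l) x := by
        refine add_le_add (le_hEntry f M hf l (Function.update x i y) z z') ?_
        rw [← key]
        exact le_hEntry f M hf (i :: l) x (Function.update z i (x i)) (Function.update z' i y)

lemma opNorm_bddAbove {n j : ℕ} (T : (Fin j → Fin n) → ℝ) :
    BddAbove (Set.range fun v : {v : Fin j → Fin n → ℝ // ∀ s, ∑ k, (v s k) ^ 2 ≤ 1} =>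
      ∑ ι : Fin j → Fin n, T ι * ∏ s, v.1 s (ι s)) := by
  refine ⟨∑ ι : Fin j → Fin n, |T ι|, ?_⟩
  rintro _ ⟨⟨v, hv⟩, rfl⟩
  refine le_trans (Finset.sum_le_sum fun ι _ => le_abs_self _) (Finset.sum_le_sum fun ι _ => ?_)
  rw [abs_mul]
  have h2 : |∏ s, v s (ι s)| ≤ 1 := by
    rw [Finset.abs_prod]
    refine Finset.prod_le_one (fun s _ => abs_nonneg _) (fun s _ => ?_)
    have h1 : (v s (ι s)) ^ 2 ≤ 1 :=
      le_trans (Finset.single_le_sum (f := fun k => (v s k) ^ 2) (fun k _ => sq_nonneg _) (Finset.mem_univ (ι s))) (hv s)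
    exact (sq_le_one_iff_abs_le_one _).1 h1
  calc |T ι| * |∏ s, v s (ι s)| ≤ |T ι| * 1 := mul_le_mul_of_nonneg_left h2 (abs_nonneg _)
    _ = |T ι| := mul_one _

lemma le_opNorm {n j : ℕ} (T : (Fin j → Fin n) → ℝ) (v : Fin j → Fin n → ℝ)
    (hv : ∀ s, ∑ k, (v s k) ^ 2 ≤ 1) :
    ∑ ι : Fin j → Fin n, T ι * ∏ s, v s (ι s) ≤ opNorm T :=
  le_ciSup (opNorm_bddAbove T) ⟨v, hv⟩

instance vNonempty {n j : ℕ} : Nonempty {v : Fin j → Fin n → ℝ // ∀ s, ∑ k, (v s k) ^ 2 ≤ 1} :=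
  ⟨⟨fun _ _ => 0, fun s => by simp⟩⟩

lemma opNorm_le {n j : ℕ} (T : (Fin j → Fin n) → ℝ) (B : ℝ)
    (hB : ∀ v : Fin j → Fin n → ℝ, (∀ s, ∑ k, (v s k) ^ 2 ≤ 1) →
      ∑ ι : Fin j → Fin n, T ι * ∏ s, v s (ι s) ≤ B) : opNorm T ≤ B :=
  ciSup_le fun v => hB v.1 v.2

lemma opNorm_nonneg {n j : ℕ} (T : (Fin j → Fin n) → ℝ) (hT : ∀ ι, 0 ≤ T ι) :
    0 ≤ opNorm T := by
  refine le_trans ?_ (le_opNorm T (fun _ _ => 0) (fun s => by simp))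
  exact Finset.sum_nonneg fun ι _ => mul_nonneg (hT ι) (Finset.prod_nonneg fun s _ => le_rfl)

lemma hTensor_nonneg (f : (Fin n → 𝒳) → ℝ) (M : ℝ) (hf : ∀ x, |f x| ≤ M)
    (j : ℕ) (x : Fin n → 𝒳) (ι : Fin j → Fin n) : 0 ≤ hTensor f j x ι := by
  unfold hTensor
  split_ifs
  · exact hEntry_nonneg f M hf _ x
  · exact le_rfl

lemma hPlus_bddAbove (g : (Fin n → 𝒳) → ℝ) (hg : ∀ y, 0 ≤ g y) (i : Fin n) (x : Fin n → 𝒳) :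
    BddAbove (Set.range fun y : 𝒳 => max (g x - g (Function.update x i y)) 0) := by
  refine ⟨max (g x) 0, ?_⟩
  rintro _ ⟨y, rfl⟩
  exact max_le_max (by linarith [hg (Function.update x i y)]) le_rfl

lemma hPlus_nonneg (g : (Fin n → 𝒳) → ℝ) (hg : ∀ y, 0 ≤ g y) (i : Fin n) (x : Fin n → 𝒳) :
    0 ≤ hPlus g i x :=
  le_trans (le_max_right _ 0) (le_ciSup (hPlus_bddAbove g hg i x) (Classical.arbitrary 𝒳))

lemma cons_constraint {n j : ℕ} (w : Fin n → ℝ) (v : Fin j → Fin n → ℝ)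
    (hw : ∑ k, (w k) ^ 2 ≤ 1) (hv : ∀ s, ∑ k, (v s k) ^ 2 ≤ 1) :
    ∀ s : Fin (j + 1), ∑ k, ((Fin.cons w v : Fin (j + 1) → Fin n → ℝ) s k) ^ 2 ≤ 1 := by
  intro s
  refine Fin.cases ?_ ?_ s
  · simpa using hw
  · intro t; simpa using hv t

lemma sum_cons_eq {n j : ℕ} (T : (Fin (j + 1) → Fin n) → ℝ) (w : Fin n → ℝ)
    (v : Fin j → Fin n → ℝ) :
    ∑ i : Fin n, ∑ ι : Fin j → Fin n, T (Fin.cons i ι) * (w i * ∏ s, v s (ι s)) =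
      ∑ κ : Fin (j + 1) → Fin n,
        T κ * ∏ s, (Fin.cons w v : Fin (j + 1) → Fin n → ℝ) s (κ s) := by
  rw [show ∑ i : Fin n, ∑ ι : Fin j → Fin n, T (Fin.cons i ι) * (w i * ∏ s, v s (ι s)) =
      ∑ p : Fin n × (Fin j → Fin n), T (Fin.cons p.1 p.2) * (w p.1 * ∏ s, v s (p.2 s)) from
    (Fintype.sum_prod_type fun p => T (Fin.cons p.1 p.2) * (w p.1 * ∏ s, v s (p.2 s))).symm]
  refine Fintype.sum_equiv (Fin.consEquiv fun _ => Fin n) _ _ (fun p => ?_)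
  simp [Fin.consEquiv, Fin.prod_univ_succ]

end Aux

/-- `|𝔥⁺ |𝔥^{(j)} f|_op | ≤ |𝔥^{(j+1)} f|_op` pointwise. -/
theorem stmt_17 {n : ℕ} {𝒳 : Type*} [Nonempty 𝒳] (f : (Fin n → 𝒳) → ℝ)
    (M : ℝ) (hf : ∀ x, |f x| ≤ M) (j : ℕ) (x : Fin n → 𝒳) :
    Real.sqrt (∑ i, (hPlus (fun y => opNorm (hTensor f j y)) i x) ^ 2) ≤
      opNorm (hTensor f (j + 1) x) := by
  set g : (Fin n → 𝒳) → ℝ := fun y => opNorm (hTensor f j y) with hgdef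
  have hgnn : ∀ y, 0 ≤ g y := fun y => opNorm_nonneg _ (hTensor_nonneg f M hf j y)
  set h : Fin n → ℝ := fun i => hPlus g i x with hhdef
  have hhnn : ∀ i, 0 ≤ h i := fun i => hPlus_nonneg g hgnn i x
  have hT'nn : ∀ κ, 0 ≤ hTensor f (j + 1) x κ := hTensor_nonneg f M hf (j + 1) x
  have hopnn : 0 ≤ opNorm (hTensor f (j + 1) x) := opNorm_nonneg _ hT'nn
  show Real.sqrt (∑ i, h i ^ 2) ≤ opNorm (hTensor f (j + 1) x)
  rcases eq_or_lt_of_le (Finset.sum_nonneg (fun i _ => sq_nonneg (h i))) with hS | hS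
  · rw [← hS, Real.sqrt_zero]; exact hopnn
  · have hS2 : Real.sqrt (∑ i, h i ^ 2) ^ 2 = ∑ i, h i ^ 2 := Real.sq_sqrt hS.le
    have hSpos : 0 < Real.sqrt (∑ i, h i ^ 2) := Real.sqrt_pos.2 hS
    set S := Real.sqrt (∑ i, h i ^ 2) with hSdef
    set w : Fin n → ℝ := fun i => h i / S with hwdef
    have hwnn : ∀ i, 0 ≤ w i := fun i => div_nonneg (hhnn i) hSpos.le
    have hwsum : ∑ i, w i ^ 2 = 1 := by
      simp only [hwdef, div_pow, ← Finset.sum_div]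
      rw [← hS2, div_self (pow_ne_zero 2 hSpos.ne')]
    have hwle : ∀ i, w i ≤ 1 := by
      intro i
      have h1 : w i ^ 2 ≤ 1 := by
        rw [← hwsum]
        exact Finset.single_le_sum (f := fun i => w i ^ 2) (fun i _ => sq_nonneg _)
          (Finset.mem_univ i)
      exact le_trans (le_abs_self _) ((sq_le_one_iff_abs_le_one _).1 h1)
    have hkey : S = ∑ i, h i * w i := by
      have h1 : ∑ i, h i * w i = (∑ i, h i ^ 2) / S := by
        rw [Finset.sum_div]
        exact Finset.sum_congr rfl fun i _ => by rw [hwdef]; field_simp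
      rw [h1, ← hS2, sq, mul_div_assoc, div_self hSpos.ne', mul_one]
    rw [hkey]
    refine le_of_forall_pos_le_add (fun ε hε => ?_)
    set δ : ℝ := ε / (2 * n + 1) with hδdef
    have hδpos : 0 < δ := by positivity
    -- near-optimal nonnegative v for g x
    obtain ⟨v, hvc, hvnn, hvval⟩ : ∃ v : Fin j → Fin n → ℝ,
        (∀ s, ∑ k, (v s k) ^ 2 ≤ 1) ∧ (∀ s k, 0 ≤ v s k) ∧
        g x - δ ≤ ∑ ι : Fin j → Fin n, hTensor f j x ι * ∏ s, v s (ι s) := by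
      have h1 : g x - δ < ⨆ v : {v : Fin j → Fin n → ℝ // ∀ s, ∑ k, (v s k) ^ 2 ≤ 1},
          ∑ ι : Fin j → Fin n, hTensor f j x ι * ∏ s, v.1 s (ι s) := by
        have h2 : g x - δ < g x := by linarith
        exact h2
      obtain ⟨v₀, hlt⟩ := exists_lt_of_lt_ciSup h1
      refine ⟨fun s k => |v₀.1 s k|, fun s => by simpa [sq_abs] using v₀.2 s,
        fun s k => abs_nonneg _, ?_⟩
      refine le_trans hlt.le (Finset.sum_le_sum fun ι _ => ?_)
      refine mul_le_mul_of_nonneg_left ?_ (hTensor_nonneg f M hf j x ι)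
      exact le_trans (le_abs_self _) (le_of_eq (Finset.abs_prod _ _))
    -- near-optimal y i for each i
    have hy' : ∀ i : Fin n, ∃ y : 𝒳, h i - δ ≤ max (g x - g (Function.update x i y)) 0 := by
      intro i
      have h1 : h i - δ < ⨆ y : 𝒳, max (g x - g (Function.update x i y)) 0 := by
        have h2 : h i - δ < h i := by linarith
        exact h2
      obtain ⟨y, hlt⟩ := exists_lt_of_lt_ciSup h1
      exact ⟨y, hlt.le⟩
    choose y hy using hy'
    -- per-coordinate bound
    have hstep : ∀ i, h i ≤
        (∑ ι : Fin j → Fin n, hTensor f (j + 1) x (Fin.cons i ι) * ∏ s, v s (ι s)) + 2 * δ := by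
      intro i
      have hentry : ∀ ι : Fin j → Fin n,
          hTensor f j x ι - hTensor f j (Function.update x i (y i)) ι ≤
            hTensor f (j + 1) x (Fin.cons i ι) := by
        intro ι
        by_cases hinj : Function.Injective ι
        · by_cases hmem : i ∈ List.ofFn ι
          · have he : hTensor f j (Function.update x i (y i)) ι = hTensor f j x ι := by
              simp only [hTensor, if_pos hinj]
              exact hEntry_update_mem f _ x hmem (y i)
            rw [he, sub_self]
            exact hT'nn _
          · have hconsinj : Function.Injective (Fin.cons i ι : Fin (j + 1) → Fin n) := by
              rw [Fin.cons_injective_iff]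
              exact ⟨by simpa [List.mem_ofFn] using hmem, hinj⟩
            have hoffn : List.ofFn (Fin.cons i ι : Fin (j + 1) → Fin n) = i :: List.ofFn ι := by
              simp [List.ofFn_succ]
            simp only [hTensor, if_pos hinj, if_pos hconsinj, hoffn]
            have := hEntry_sub_le f M hf (List.ofFn ι) x hmem (y i)
            linarith
        · have hconsnot : ¬ Function.Injective (Fin.cons i ι : Fin (j + 1) → Fin n) := by
            rw [Fin.cons_injective_iff]; tauto
          simp [hTensor, hinj, hconsnot]
      have hgub : ∑ ι : Fin j → Fin n,
          hTensor f j (Function.update x i (y i)) ι * ∏ s, v s (ι s) ≤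
            g (Function.update x i (y i)) := le_opNorm _ v hvc
      have hPnn : 0 ≤ ∑ ι : Fin j → Fin n,
          hTensor f (j + 1) x (Fin.cons i ι) * ∏ s, v s (ι s) :=
        Finset.sum_nonneg fun ι _ => mul_nonneg (hT'nn _)
          (Finset.prod_nonneg fun s _ => hvnn s _)
      have hsum : ∑ ι : Fin j → Fin n, hTensor f j x ι * ∏ s, v s (ι s)
          - ∑ ι : Fin j → Fin n, hTensor f j (Function.update x i (y i)) ι * ∏ s, v s (ι s) ≤
          ∑ ι : Fin j → Fin n, hTensor f (j + 1) x (Fin.cons i ι) * ∏ s, v s (ι s) := by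
        rw [← Finset.sum_sub_distrib]
        refine Finset.sum_le_sum fun ι _ => ?_
        rw [← sub_mul]
        exact mul_le_mul_of_nonneg_right (hentry ι)
          (Finset.prod_nonneg fun s _ => hvnn s _)
      have hdiff : g x - g (Function.update x i (y i)) ≤
          (∑ ι : Fin j → Fin n, hTensor f (j + 1) x (Fin.cons i ι) * ∏ s, v s (ι s)) + δ := by
        linarith
      have hmax : max (g x - g (Function.update x i (y i))) 0 ≤
          (∑ ι : Fin j → Fin n, hTensor f (j + 1) x (Fin.cons i ι) * ∏ s, v s (ι s)) + δ :=
        max_le hdiff (by linarith)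
      linarith [hy i]
    -- sum up
    have htotal : ∑ i, h i * w i ≤
        (∑ i : Fin n, ∑ ι : Fin j → Fin n,
          hTensor f (j + 1) x (Fin.cons i ι) * (w i * ∏ s, v s (ι s))) + (n : ℝ) * (2 * δ) := by
      calc ∑ i, h i * w i
          ≤ ∑ i : Fin n, ((∑ ι : Fin j → Fin n,
              hTensor f (j + 1) x (Fin.cons i ι) * ∏ s, v s (ι s)) + 2 * δ) * w i :=
            Finset.sum_le_sum fun i _ => mul_le_mul_of_nonneg_right (hstep i) (hwnn i)
        _ = ∑ i : Fin n, ((∑ ι : Fin j → Fin n,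
              hTensor f (j + 1) x (Fin.cons i ι) * (w i * ∏ s, v s (ι s))) + 2 * δ * w i) := by
            refine Finset.sum_congr rfl fun i _ => ?_
            rw [add_mul, Finset.sum_mul]
            congr 1
            exact Finset.sum_congr rfl fun ι _ => by ring
        _ = (∑ i : Fin n, ∑ ι : Fin j → Fin n,
              hTensor f (j + 1) x (Fin.cons i ι) * (w i * ∏ s, v s (ι s)))
            + ∑ i : Fin n, 2 * δ * w i := Finset.sum_add_distrib
        _ ≤ _ := by
            refine add_le_add (le_refl _) ?_
            calc ∑ i : Fin n, 2 * δ * w i ≤ ∑ i : Fin n, 2 * δ * 1 :=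
                Finset.sum_le_sum fun i _ =>
                  mul_le_mul_of_nonneg_left (hwle i) (by linarith)
              _ = (n : ℝ) * (2 * δ) := by
                  simp [Finset.sum_const, Finset.card_univ]
    have hop : ∑ i : Fin n, ∑ ι : Fin j → Fin n,
        hTensor f (j + 1) x (Fin.cons i ι) * (w i * ∏ s, v s (ι s)) ≤
          opNorm (hTensor f (j + 1) x) := by
      rw [sum_cons_eq]
      exact le_opNorm _ _ (cons_constraint w v hwsum.le hvc)
    have hnd : (n : ℝ) * (2 * δ) ≤ ε := by
      have h1 : (0 : ℝ) < 2 * n + 1 := by positivity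
      have hq : δ * (2 * n + 1) = ε := div_mul_cancel₀ ε h1.ne'
      nlinarith [hδpos.le]
    linarith

end
end
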